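/- The twisting maps R₀₁, R₁₂ and the flip R₀₂ : ℂH ⊗ ℂH → ℂH ⊗ ℂH satisfy the hexagon equation (id⊗R₁₂)∘(R₀₂⊗id)∘(id⊗R₀₁) = (R₀₁⊗id)∘(id⊗R₀₂)∘(R₁₂⊗id); explicitly, both sides send h₂ ⊗ δ_g ⊗ h₁ to h₁ ⊗ δ_{h₁⁻¹gh₂⁻¹} ⊗ h₂. -/
import Mathlib

open scoped BigOperators

noncomputable section

variable {G : Type*} [Group G] [Fintype G] [DecidableEq G]

/-- The twisting map `R₀₁ : Ĝ ⊗ ℂH → ℂH ⊗ Ĝ`, `δ_g ⊗ h ↦ h ⊗ δ_{h⁻¹g}`, on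
coefficient functions (`Ĝ ⊗ ℂH` is modelled as `G × H → ℂ`, etc.). -/
def R01 (H : Subgroup G) (a : G × H → ℂ) : H × G → ℂ :=
  fun p => a ((p.1 : G) * p.2, p.1)

/-- The twisting map `R₁₂ : ℂH ⊗ Ĝ → Ĝ ⊗ ℂH`, `h ⊗ δ_g ↦ δ_{gh⁻¹} ⊗ h`. -/
def R12 (H : Subgroup G) (a : H × G → ℂ) : G × H → ℂ :=
  fun p => a (p.2, p.1 * (p.2 : G))

/-- Basis element `h ⊗ δ_g ⊗ f` of `ℂH ⊗ Ĝ ⊗ ℂH` (coefficient-function model). -/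
def bas3 (H : Subgroup G) (h : H) (g : G) (f : H) : H × G × H → ℂ :=
  fun p => if p = (h, g, f) then 1 else 0

/-- `id_{A₂} ⊗ R₀₁ : ℂH⊗(Ĝ⊗ℂH) → ℂH⊗(ℂH⊗Ĝ)` (here `A₂ = ℂH` is the leftmost factor,
acting on the coefficient model `H × G × H → ℂ`). -/
def hexL1 (H : Subgroup G) (a : H × G × H → ℂ) : H × H × G → ℂ :=
  fun p => a (p.1, (p.2.1 : G) * p.2.2, p.2.1)

/-- `R₀₂ ⊗ id : ℂH⊗ℂH⊗Ĝ → ℂH⊗ℂH⊗Ĝ`, the flip of the two `ℂH` factors. -/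
def hexL2 (H : Subgroup G) (a : H × H × G → ℂ) : H × H × G → ℂ :=
  fun p => a (p.2.1, p.1, p.2.2)

/-- `id_{A₀} ⊗ R₁₂ : ℂH⊗(ℂH⊗Ĝ) → ℂH⊗(Ĝ⊗ℂH)`. -/
def hexL3 (H : Subgroup G) (a : H × H × G → ℂ) : H × G × H → ℂ :=
  fun p => a (p.1, p.2.2, p.2.1 * (p.2.2 : G))

/-- `R₁₂ ⊗ id_{A₀} : (ℂH⊗Ĝ)⊗ℂH → (Ĝ⊗ℂH)⊗ℂH`. -/
def hexR1 (H : Subgroup G) (a : H × G × H → ℂ) : G × H × H → ℂ :=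
  fun p => a (p.2.1, p.1 * (p.2.1 : G), p.2.2)

/-- `id_Ĝ ⊗ R₀₂ : Ĝ⊗(ℂH⊗ℂH) → Ĝ⊗(ℂH⊗ℂH)`, flipping the two `ℂH` factors. -/
def hexR2 (H : Subgroup G) (a : G × H × H → ℂ) : G × H × H → ℂ :=
  fun p => a (p.1, p.2.2, p.2.1)

/-- `R₀₁ ⊗ id_{A₂} : (Ĝ⊗ℂH)⊗ℂH → (ℂH⊗Ĝ)⊗ℂH`. -/
def hexR3 (H : Subgroup G) (a : G × H × H → ℂ) : H × G × H → ℂ :=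
  fun p => a ((p.1 : G) * p.2.1, p.1, p.2.2)

/-- the twisting maps `R₀₁, R₁₂` and the flip `R₀₂` satisfy the hexagon
equation `(id⊗R₁₂)∘(R₀₂⊗id)∘(id⊗R₀₁) = (R₀₁⊗id)∘(id⊗R₀₂)∘(R₁₂⊗id)`; explicitly, both
sides send the basis element `h₂ ⊗ δ_g ⊗ h₁` to `h₁ ⊗ δ_{h₁⁻¹gh₂⁻¹} ⊗ h₂`. -/
theorem statement14 (H : Subgroup G) :
    (∀ a : H × G × H → ℂ,
      hexL3 H (hexL2 H (hexL1 H a)) = hexR3 H (hexR2 H (hexR1 H a))) ∧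
    (∀ (h₁ h₂ : H) (g : G),
      hexL3 H (hexL2 H (hexL1 H (bas3 H h₂ g h₁)))
        = bas3 H h₁ ((h₁ : G)⁻¹ * g * (h₂ : G)⁻¹) h₂) := by
  constructor
  · intro a
    funext p
    simp [hexL1, hexL2, hexL3, hexR1, hexR2, hexR3, mul_assoc]
  · intro h₁ h₂ g
    funext p
    obtain ⟨a, b, c⟩ := p
    simp only [hexL1, hexL2, hexL3, bas3, Prod.mk.injEq]
    congr 1
    simp only [eq_iff_iff]
    constructor
    · rintro ⟨rfl, rfl, rfl⟩
      refine ⟨rfl, ?_, rfl⟩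
      group
    · rintro ⟨rfl, rfl, rfl⟩
      refine ⟨rfl, ?_, rfl⟩
      push_cast
      group
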